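/- Let A and C be positive integers with |A − C| ≤ 1 and set m = 2A + C. Then A² − t(t+1)/2 − s(s+1)/2 = ⌊(m² + 3)/12⌋, where t = ⌊(2A − C − 1)/2⌋ and s = ⌊(2A − C)/2⌋ (with the convention that t(t+1)/2 = 0 when t = −1). -/

import Mathlib

/-- For positive integers A, C with |A − C| ≤ 1 and m = 2A + C,
one has A² − t(t+1)/2 − s(s+1)/2 = ⌊(m² + 3)/12⌋ where t = ⌊(2A − C − 1)/2⌋
and s = ⌊(2A − C)/2⌋ (the convention t(t+1)/2 = 0 for t = −1 holds
automatically). -/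
theorem hexagon_queen_count (A C : ℕ) (m : ℕ) (hA : 0 < A) (hC : 0 < C)
    (h : |(A : ℤ) - (C : ℤ)| ≤ 1) (hm : m = 2 * A + C)
    (t s : ℤ) (ht : t = Int.fdiv (2 * (A : ℤ) - C - 1) 2)
    (hs : s = Int.fdiv (2 * (A : ℤ) - C) 2) :
    (A : ℤ) ^ 2 - t * (t + 1) / 2 - s * (s + 1) / 2 = ((m ^ 2 + 3) / 12 : ℕ) := by
  rw [abs_le] at h
  rw [Int.fdiv_eq_ediv_of_nonneg _ (by norm_num)] at ht hs
  obtain ⟨u, hu⟩ := Int.even_mul_succ_self t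
  obtain ⟨v, hv⟩ := Int.even_mul_succ_self s
  rw [hu, hv]
  have hud : (u + u) / 2 = u := by omega
  have hvd : (v + v) / 2 = v := by omega
  rw [hud, hvd]
  have hcast : (((m ^ 2 + 3) / 12 : ℕ) : ℤ) = ((m : ℤ) ^ 2 + 3) / 12 := by
    rw [Int.natCast_ediv]; push_cast; ring_nf
  rw [hcast]
  have hmz : (m : ℤ) = 2 * (A : ℤ) + C := by exact_mod_cast hm
  rw [hmz]
  have hC3 : (C : ℤ) = (A : ℤ) - 1 ∨ (C : ℤ) = (A : ℤ) ∨ (C : ℤ) = (A : ℤ) + 1 := by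
    omega
  have hA1 : 1 ≤ (A : ℤ) := by exact_mod_cast hA
  obtain ⟨k, hk⟩ | ⟨k, hk⟩ := Nat.even_or_odd A
  · -- A = k + k
    have hAk : (A : ℤ) = 2 * (k : ℤ) := by push_cast [hk]; ring
    have hk1 : 1 ≤ (k : ℤ) := by omega
    rcases hC3 with hC3 | hC3 | hC3
    · -- C = A - 1, t = k, s = k, Q = 3k^2 - k, r = 4
      have ht' : t = (k : ℤ) := by omega
      have hs' : s = (k : ℤ) := by omega
      rw [ht'] at hu; rw [hs'] at hv
      have hnum : (2 * (A : ℤ) + C) ^ 2 + 3 = 12 * (3 * (k:ℤ) * k - k) + 4 := by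
        rw [hC3, hAk]; ring
      rw [hnum]
      have hdiv : (12 * (3 * (k:ℤ) * k - k) + 4) / 12 = 3 * (k:ℤ) * k - k := by
        generalize (3 * (k:ℤ) * k - k) = X; omega
      rw [hdiv, hAk]
      linarith [hu, hv]
    · -- C = A, t = k - 1, s = k, Q = 3k^2, r = 3
      have ht' : t = (k : ℤ) - 1 := by omega
      have hs' : s = (k : ℤ) := by omega
      rw [ht'] at hu; rw [hs'] at hv
      have hnum : (2 * (A : ℤ) + C) ^ 2 + 3 = 12 * (3 * (k:ℤ) * k) + 3 := by
        rw [hC3, hAk]; ring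
      rw [hnum]
      have hdiv : (12 * (3 * (k:ℤ) * k) + 3) / 12 = 3 * (k:ℤ) * k := by
        generalize (3 * (k:ℤ) * k) = X; omega
      rw [hdiv, hAk]
      have hu2 : 2 * u = (k:ℤ) * k - k := by linear_combination -hu
      have hv2 : 2 * v = (k:ℤ) * k + k := by linear_combination -hv
      linarith [hu2, hv2]
    · -- C = A + 1, t = k - 1, s = k - 1, Q = 3k^2 + k, r = 4
      have ht' : t = (k : ℤ) - 1 := by omega
      have hs' : s = (k : ℤ) - 1 := by omega
      rw [ht'] at hu; rw [hs'] at hv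
      have hnum : (2 * (A : ℤ) + C) ^ 2 + 3 = 12 * (3 * (k:ℤ) * k + k) + 4 := by
        rw [hC3, hAk]; ring
      rw [hnum]
      have hdiv : (12 * (3 * (k:ℤ) * k + k) + 4) / 12 = 3 * (k:ℤ) * k + k := by
        generalize (3 * (k:ℤ) * k + k) = X; omega
      rw [hdiv, hAk]
      have hu2 : 2 * u = (k:ℤ) * k - k := by linear_combination -hu
      have hv2 : 2 * v = (k:ℤ) * k - k := by linear_combination -hv
      linarith [hu2, hv2]
  · -- A = 2k + 1
    have hAk : (A : ℤ) = 2 * (k : ℤ) + 1 := by push_cast [hk]; ring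
    rcases hC3 with hC3 | hC3 | hC3
    · -- C = A - 1 = 2k, t = k, s = k + 1, Q = 3k^2 + 2k, r = 7
      have ht' : t = (k : ℤ) := by omega
      have hs' : s = (k : ℤ) + 1 := by omega
      rw [ht'] at hu; rw [hs'] at hv
      have hnum : (2 * (A : ℤ) + C) ^ 2 + 3 = 12 * (3 * (k:ℤ) * k + 2 * k) + 7 := by
        rw [hC3, hAk]; ring
      rw [hnum]
      have hdiv : (12 * (3 * (k:ℤ) * k + 2 * k) + 7) / 12 = 3 * (k:ℤ) * k + 2 * k := by
        generalize (3 * (k:ℤ) * k + 2 * k) = X; omega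
      rw [hdiv, hAk]
      have hu2 : 2 * u = (k:ℤ) * k + k := by linear_combination -hu
      have hv2 : 2 * v = (k:ℤ) * k + 3 * k + 2 := by linear_combination -hv
      linarith [hu2, hv2]
    · -- C = A = 2k+1, t = k, s = k, Q = 3k^2 + 3k + 1, r = 0
      have ht' : t = (k : ℤ) := by omega
      have hs' : s = (k : ℤ) := by omega
      rw [ht'] at hu; rw [hs'] at hv
      have hnum : (2 * (A : ℤ) + C) ^ 2 + 3 = 12 * (3 * (k:ℤ) * k + 3 * k + 1) := by
        rw [hC3, hAk]; ring
      rw [hnum]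
      have hdiv : (12 * (3 * (k:ℤ) * k + 3 * k + 1)) / 12 = 3 * (k:ℤ) * k + 3 * k + 1 := by
        generalize (3 * (k:ℤ) * k + 3 * k + 1) = X; omega
      rw [hdiv, hAk]
      have hu2 : 2 * u = (k:ℤ) * k + k := by linear_combination -hu
      have hv2 : 2 * v = (k:ℤ) * k + k := by linear_combination -hv
      linarith [hu2, hv2]
    · -- C = A + 1 = 2k+2, t = k - 1, s = k, Q = 3k^2 + 4k + 1, r = 7
      have ht' : t = (k : ℤ) - 1 := by omega
      have hs' : s = (k : ℤ) := by omega
      rw [ht'] at hu; rw [hs'] at hv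
      have hnum : (2 * (A : ℤ) + C) ^ 2 + 3 = 12 * (3 * (k:ℤ) * k + 4 * k + 1) + 7 := by
        rw [hC3, hAk]; ring
      rw [hnum]
      have hdiv : (12 * (3 * (k:ℤ) * k + 4 * k + 1) + 7) / 12 = 3 * (k:ℤ) * k + 4 * k + 1 := by
        generalize (3 * (k:ℤ) * k + 4 * k + 1) = X; omega
      rw [hdiv, hAk]
      have hu2 : 2 * u = (k:ℤ) * k - k := by linear_combination -hu
      have hv2 : 2 * v = (k:ℤ) * k + k := by linear_combination -hv
      linarith [hu2, hv2]
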